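/- (Lemma: a one-layer attention-only transformer cannot ICL the class of linear functions.) Let d ≥ 1, let C ∈ ℝ^d with C ≠ 0, and let ε be any real with 0 < ε < ‖C‖². Then for every p ≥ 1 and every δ > 0 there exist a coefficient a > 0 and context points x₁, …, x_p with 0 < x_j < δ for all j such that ‖(a+1)·(∑_{j=1}^p x_j)·C‖² ≥ ε·(1 + (a+1)·∑_{j=1}^p x_j)²; that is, the accuracy condition required for the one-layer model with parameter vector C to ε-approximate the target f(x) = a·x at query x = 0 fails. -/

import Mathlib

theorem stmt_14 (d : ℕ) (hd : 1 ≤ d) (C : EuclideanSpace ℝ (Fin d)) (hC : C ≠ 0)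
    (ε : ℝ) (hε : 0 < ε) (hεC : ε < ‖C‖ ^ 2) :
    ∀ p : ℕ, 1 ≤ p → ∀ δ : ℝ, 0 < δ →
      ∃ a : ℝ, 0 < a ∧ ∃ xs : Fin p → ℝ, (∀ j, 0 < xs j ∧ xs j < δ) ∧
        ε * (1 + (a + 1) * ∑ j, xs j) ^ 2 ≤ ‖((a + 1) * ∑ j, xs j) • C‖ ^ 2 := by
  intro p hp δ hδ
  have hCpos : 0 < ‖C‖ := norm_pos_iff.mpr hC
  have hsε : Real.sqrt ε < ‖C‖ := by
    have := Real.sqrt_lt_sqrt hε.le hεC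
    rwa [Real.sqrt_sq hCpos.le] at this
  have hsεpos : 0 < Real.sqrt ε := Real.sqrt_pos.mpr hε
  set S : ℝ := (p : ℝ) * (δ / 2) with hS
  have hSpos : 0 < S := by
    have : (0:ℝ) < (p:ℝ) := by exact_mod_cast hp.trans_lt' (by norm_num)
    positivity
  set t₀ : ℝ := Real.sqrt ε / (‖C‖ - Real.sqrt ε) + 1 with ht₀
  have ht₀pos : 0 < t₀ := by
    have : 0 < Real.sqrt ε / (‖C‖ - Real.sqrt ε) := by
      apply div_pos hsεpos; linarith
    rw [ht₀]; linarith
  refine ⟨t₀ / S, div_pos ht₀pos hSpos, fun _ => δ / 2, fun j => ⟨by linarith, by linarith⟩, ?_⟩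
  have hsum : ∑ _j : Fin p, δ / 2 = S := by
    simp [hS, mul_comm]
  rw [hsum]
  set t : ℝ := (t₀ / S + 1) * S with ht
  have htval : t = t₀ + S := by rw [ht, add_mul, one_mul, div_mul_cancel₀ t₀ hSpos.ne']
  have htge : Real.sqrt ε / (‖C‖ - Real.sqrt ε) ≤ t := by
    rw [htval]; have := ht₀pos; simp only [ht₀]; linarith
  have htpos : 0 < t := by rw [htval]; linarith
  have hkey : Real.sqrt ε * (1 + t) ≤ t * ‖C‖ := by
    have h1 : Real.sqrt ε ≤ t * (‖C‖ - Real.sqrt ε) := by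
      rw [div_le_iff₀ (by linarith)] at htge
      linarith [htge]
    nlinarith
  have hsq : (Real.sqrt ε * (1 + t)) ^ 2 ≤ (t * ‖C‖) ^ 2 := by
    apply sq_le_sq' _ hkey
    have : 0 ≤ Real.sqrt ε * (1 + t) := by positivity
    nlinarith [mul_nonneg htpos.le hCpos.le]
  have hεsq : Real.sqrt ε ^ 2 = ε := Real.sq_sqrt hε.le
  rw [norm_smul]
  have : ε * (1 + t) ^ 2 ≤ (t * ‖C‖) ^ 2 := by
    calc ε * (1 + t) ^ 2 = (Real.sqrt ε * (1 + t)) ^ 2 := by rw [mul_pow, hεsq]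
    _ ≤ _ := hsq
  calc ε * (1 + t) ^ 2 ≤ (t * ‖C‖) ^ 2 := this
    _ ≤ (‖t‖ * ‖C‖) ^ 2 := by rw [Real.norm_eq_abs, abs_of_pos htpos]
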